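/- Let Q be a bipartite quiver on a finite vertex set V (not assumed recurrent). Then Q has a fixed point if and only if Q has a strictly subadditive labeling. -/

import Mathlib

open scoped BigOperators

/-- A bipartite quiver on a finite vertex set `V`, encoded by a bipartition `eps`
and the two symmetric edge-multiplicity matrices `A` (arrows from `eps = 0` to `eps = 1`)
and `B` (arrows from `eps = 1` to `eps = 0`). -/
def BipartiteData {V : Type} [Fintype V] (eps : V → ℤ) (A B : V → V → ℕ) : Prop :=
  (∀ v, eps v = 0 ∨ eps v = 1) ∧
  (∀ u v, A u v = A v u) ∧
  (∀ u v, B u v = B v u) ∧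
  (∀ v, A v v = 0) ∧
  (∀ v, B v v = 0) ∧
  (∀ u v, eps u = eps v → A u v = 0 ∧ B u v = 0) ∧
  (∀ u v, A u v * B u v = 0)

/-- A bipartite quiver is recurrent iff the matrices `A` and `B` commute. -/
def RecurrentQuiver {V : Type} [Fintype V] (A B : V → V → ℕ) : Prop :=
  ∀ u v, (∑ w, A u w * B w v) = ∑ w, B u w * A w v

/-- A fixed point of the `T`-system dynamics: `ρ : V → ℝ` with `ρ v > 1` and
`ρ v ^ 2 = ∏ u, ρ u ^ A v u + ∏ u, ρ u ^ B v u` for all `v`. -/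
def IsFixedPoint {V : Type} [Fintype V] (A B : V → V → ℕ) (rho : V → ℝ) : Prop :=
  (∀ v, 1 < rho v) ∧
  (∀ v, rho v ^ 2 = (∏ u, rho u ^ A v u) + (∏ u, rho u ^ B v u))

/-- A strictly subadditive labeling: `ν : V → ℝ` positive with
`2ν v > Σ_u A v u * ν u` and `2ν v > Σ_u B v u * ν u` for all `v`. -/
def IsStrictlySubadditiveLabeling {V : Type} [Fintype V] (A B : V → V → ℕ)
    (nu : V → ℝ) : Prop :=
  (∀ v, 0 < nu v) ∧
  (∀ v, (∑ u, (A v u : ℝ) * nu u) < 2 * nu v) ∧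
  (∀ v, (∑ u, (B v u : ℝ) * nu u) < 2 * nu v)

open Filter Real Topology

lemma aux_exists_fixedPoint {V : Type} [Fintype V] (A B : V → V → ℕ) (nu : V → ℝ)
    (hpos : ∀ v, 0 < nu v)
    (hA : ∀ v, (∑ u, (A v u : ℝ) * nu u) < 2 * nu v)
    (hB : ∀ v, (∑ u, (B v u : ℝ) * nu u) < 2 * nu v) :
    ∃ rho : V → ℝ, IsFixedPoint A B rho := by
  classical
  -- choose a scale t
  obtain ⟨t, ht0, htA, htB⟩ :
      ∃ t : ℝ, 0 ≤ t ∧ (∀ v, Real.log 2 ≤ t * (2 * nu v - ∑ u, (A v u : ℝ) * nu u))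
        ∧ (∀ v, Real.log 2 ≤ t * (2 * nu v - ∑ u, (B v u : ℝ) * nu u)) := by
    have h1 : ∀ᶠ t : ℝ in atTop, 0 ≤ t := eventually_ge_atTop 0
    have h2 : ∀ᶠ t : ℝ in atTop,
        ∀ v, Real.log 2 ≤ t * (2 * nu v - ∑ u, (A v u : ℝ) * nu u) := by
      rw [eventually_all]
      intro v
      exact (tendsto_id.atTop_mul_const (by linarith [hA v])).eventually_ge_atTop _
    have h3 : ∀ᶠ t : ℝ in atTop,
        ∀ v, Real.log 2 ≤ t * (2 * nu v - ∑ u, (B v u : ℝ) * nu u) := by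
      rw [eventually_all]
      intro v
      exact (tendsto_id.atTop_mul_const (by linarith [hB v])).eventually_ge_atTop _
    obtain ⟨t, ht⟩ := ((h1.and h2).and h3).exists
    exact ⟨t, ht.1.1, ht.1.2, ht.2⟩
  set M : V → ℝ := fun v => Real.exp (t * nu v) with hM
  have hM1 : ∀ v, 1 ≤ M v := fun v =>
    Real.one_le_exp (mul_nonneg ht0 (hpos v).le)
  -- the iteration map
  set F : (V → ℝ) → (V → ℝ) :=
    fun r v => Real.sqrt ((∏ u, r u ^ A v u) + (∏ u, r u ^ B v u)) with hF
  have hFmono : ∀ r s : V → ℝ, (∀ u, 0 ≤ r u) → (∀ u, r u ≤ s u) → ∀ v, F r v ≤ F s v := by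
    intro r s hr hrs v
    refine Real.sqrt_le_sqrt (add_le_add ?_ ?_) <;>
      exact Finset.prod_le_prod (fun u _ => pow_nonneg (hr u) _)
        (fun u _ => pow_le_pow_left₀ (hr u) (hrs u) _)
  have hF1 : ∀ r : V → ℝ, (∀ u, 1 ≤ r u) → ∀ v, Real.sqrt 2 ≤ F r v := by
    intro r hr v
    apply Real.sqrt_le_sqrt
    have h1 : (1:ℝ) ≤ ∏ u, r u ^ A v u := by
      simpa using Finset.prod_le_prod (s := Finset.univ) (f := fun _ : V => (1:ℝ))
        (g := fun u => r u ^ A v u) (fun u _ => zero_le_one) (fun u _ => one_le_pow₀ (hr u))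
    have h2 : (1:ℝ) ≤ ∏ u, r u ^ B v u := by
      simpa using Finset.prod_le_prod (s := Finset.univ) (f := fun _ : V => (1:ℝ))
        (g := fun u => r u ^ B v u) (fun u _ => zero_le_one) (fun u _ => one_le_pow₀ (hr u))
    linarith
  have hprodM : ∀ (C : V → V → ℕ) (v : V),
      (∏ u, M u ^ C v u) = Real.exp (t * ∑ u, (C v u : ℝ) * nu u) := by
    intro C v
    rw [Finset.mul_sum, Real.exp_sum]
    apply Finset.prod_congr rfl
    intro u _
    rw [hM, ← Real.exp_nat_mul]
    ring_nf
  have hFM : ∀ r : V → ℝ, (∀ u, 0 ≤ r u) → (∀ u, r u ≤ M u) → ∀ v, F r v ≤ M v := by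
    intro r hr hrM v
    have hbound : ∀ (C : V → V → ℕ),
        (Real.log 2 ≤ t * (2 * nu v - ∑ u, (C v u : ℝ) * nu u)) →
        (∏ u, r u ^ C v u) ≤ M v ^ 2 / 2 := by
      intro C hC
      have h1 : (∏ u, r u ^ C v u) ≤ ∏ u, M u ^ C v u :=
        Finset.prod_le_prod (fun u _ => pow_nonneg (hr u) _)
          (fun u _ => pow_le_pow_left₀ (hr u) (hrM u) _)
      rw [hprodM C v] at h1
      have h2 : Real.exp (t * ∑ u, (C v u : ℝ) * nu u) ≤ M v ^ 2 / 2 := by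
        have : t * ∑ u, (C v u : ℝ) * nu u ≤ 2 * (t * nu v) - Real.log 2 := by nlinarith
        calc Real.exp (t * ∑ u, (C v u : ℝ) * nu u)
            ≤ Real.exp (2 * (t * nu v) - Real.log 2) := Real.exp_le_exp.2 this
          _ = M v ^ 2 / 2 := by
              have hsq : M v ^ 2 = Real.exp (2 * (t * nu v)) := by
                rw [hM, ← Real.exp_nat_mul]; norm_num
              rw [Real.exp_sub, Real.exp_log two_pos, hsq]
      linarith
    have hs : (∏ u, r u ^ A v u) + (∏ u, r u ^ B v u) ≤ M v ^ 2 := by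
      have := hbound A (htA v)
      have := hbound B (htB v)
      linarith
    calc F r v ≤ Real.sqrt (M v ^ 2) := Real.sqrt_le_sqrt hs
      _ = M v := Real.sqrt_sq (by linarith [hM1 v])
  -- the iteration sequence
  set x : ℕ → V → ℝ := fun n => F^[n] (fun _ => 1) with hx
  have hxsucc : ∀ n, x (n+1) = F (x n) := by
    intro n
    rw [hx]
    exact Function.iterate_succ_apply' F n _
  have hsqrt2 : (1:ℝ) ≤ Real.sqrt 2 := by
    rw [show (1:ℝ) = Real.sqrt 1 from (Real.sqrt_one).symm]
    exact Real.sqrt_le_sqrt one_le_two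
  have hx1 : ∀ n u, 1 ≤ x n u := by
    intro n
    induction n with
    | zero => intro u; simp [hx]
    | succ n ih =>
        intro u
        rw [hxsucc]
        exact le_trans hsqrt2 (hF1 (x n) ih u)
  have hxM : ∀ n u, x n u ≤ M u := by
    intro n
    induction n with
    | zero => intro u; simpa [hx] using hM1 u
    | succ n ih =>
        intro u
        rw [hxsucc]
        exact hFM (x n) (fun w => le_trans zero_le_one (hx1 n w)) ih u
  have hxmono : ∀ n u, x n u ≤ x (n+1) u := by
    intro n
    induction n with
    | zero =>
        intro u
        rw [hxsucc]
        have h0 : x 0 u = 1 := by simp [hx]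
        have := hF1 (x 0) (hx1 0) u
        linarith
    | succ n ih =>
        intro u
        rw [hxsucc, hxsucc]
        exact hFmono (x n) (x (n+1)) (fun w => le_trans zero_le_one (hx1 n w)) ih u
  -- convergence
  have hbdd : ∀ v, BddAbove (Set.range fun n => x n v) := by
    intro v
    refine ⟨M v, ?_⟩
    rintro _ ⟨n, rfl⟩
    exact hxM n v
  set rho : V → ℝ := fun v => ⨆ n, x n v with hrho
  have htend : ∀ v, Tendsto (fun n => x n v) atTop (𝓝 (rho v)) := by
    intro v
    exact tendsto_atTop_ciSup (monotone_nat_of_le_succ (fun n => hxmono n v)) (hbdd v)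
  have hx1v : ∀ v, x 1 v = Real.sqrt 2 := by
    intro v
    have : x 1 = F (x 0) := hxsucc 0
    rw [this]
    have h0 : x 0 = fun _ => (1:ℝ) := by simp [hx]
    rw [h0, hF]
    norm_num
  have hrho_gt1 : ∀ v, 1 < rho v := by
    intro v
    have h1 : x 1 v ≤ rho v := le_ciSup (hbdd v) 1
    rw [hx1v v] at h1
    have h2 : (1:ℝ) < Real.sqrt 2 := by
      rw [show (1:ℝ) = Real.sqrt 1 from Real.sqrt_one.symm]
      exact Real.sqrt_lt_sqrt zero_le_one one_lt_two
    linarith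
  have hrho_nonneg : ∀ v, 0 ≤ rho v := fun v => le_of_lt (lt_trans one_pos (hrho_gt1 v))
  have heq : ∀ v, rho v = Real.sqrt ((∏ u, rho u ^ A v u) + (∏ u, rho u ^ B v u)) := by
    intro v
    have hT1 : Tendsto (fun n => x (n+1) v) atTop (𝓝 (rho v)) :=
      (htend v).comp (tendsto_add_atTop_nat 1)
    have hTA : Tendsto (fun n => ∏ u, x n u ^ A v u) atTop (𝓝 (∏ u, rho u ^ A v u)) :=
      tendsto_finset_prod _ (fun u _ => (htend u).pow _)
    have hTB : Tendsto (fun n => ∏ u, x n u ^ B v u) atTop (𝓝 (∏ u, rho u ^ B v u)) :=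
      tendsto_finset_prod _ (fun u _ => (htend u).pow _)
    have hT2 : Tendsto (fun n => F (x n) v) atTop
        (𝓝 (Real.sqrt ((∏ u, rho u ^ A v u) + (∏ u, rho u ^ B v u)))) :=
      (hTA.add hTB).sqrt
    have hfe : (fun n => x (n+1) v) = fun n => F (x n) v := funext fun n => by rw [hxsucc]
    exact tendsto_nhds_unique (hfe ▸ hT1) hT2
  refine ⟨rho, hrho_gt1, ?_⟩
  intro v
  rw [heq v, Real.sq_sqrt]
  have h1 : (0:ℝ) ≤ ∏ u, rho u ^ A v u :=
    Finset.prod_nonneg (fun u _ => pow_nonneg (hrho_nonneg u) _)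
  have h2 : (0:ℝ) ≤ ∏ u, rho u ^ B v u :=
    Finset.prod_nonneg (fun u _ => pow_nonneg (hrho_nonneg u) _)
  linarith

/-- a bipartite quiver has a fixed point iff it has a strictly subadditive
labeling. -/
theorem fixedPoint_iff_strictlySubadditive
    {V : Type} [Fintype V] [DecidableEq V]
    (eps : V → ℤ) (A B : V → V → ℕ)
    (hbip : BipartiteData eps A B) :
    (∃ rho : V → ℝ, IsFixedPoint A B rho) ↔
    (∃ nu : V → ℝ, IsStrictlySubadditiveLabeling A B nu) := by
  constructor
  · rintro ⟨rho, h1, h2⟩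
    have hpos : ∀ u, 0 < rho u := fun u => lt_trans one_pos (h1 u)
    refine ⟨fun v => Real.log (rho v), fun v => Real.log_pos (h1 v), ?_, ?_⟩
    · intro v
      have hprodB : 0 < ∏ u, rho u ^ B v u :=
        Finset.prod_pos fun u _ => pow_pos (hpos u) _
      have hprodA : 0 < ∏ u, rho u ^ A v u :=
        Finset.prod_pos fun u _ => pow_pos (hpos u) _
      have hlt : (∏ u, rho u ^ A v u) < rho v ^ 2 := by rw [h2 v]; linarith
      have hlog := Real.log_lt_log hprodA hlt
      rw [Real.log_prod (fun u _ => (pow_pos (hpos u) _).ne'), Real.log_pow] at hlog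
      simp only [Real.log_pow] at hlog
      push_cast at hlog
      linarith
    · intro v
      have hprodB : 0 < ∏ u, rho u ^ B v u :=
        Finset.prod_pos fun u _ => pow_pos (hpos u) _
      have hprodA : 0 < ∏ u, rho u ^ A v u :=
        Finset.prod_pos fun u _ => pow_pos (hpos u) _
      have hlt : (∏ u, rho u ^ B v u) < rho v ^ 2 := by rw [h2 v]; linarith
      have hlog := Real.log_lt_log hprodB hlt
      rw [Real.log_prod (fun u _ => (pow_pos (hpos u) _).ne'), Real.log_pow] at hlog
      simp only [Real.log_pow] at hlog
      push_cast at hlog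
      linarith
  · rintro ⟨nu, hpos, hA, hB⟩
    exact aux_exists_fixedPoint A B nu hpos hA hB
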